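/- Let ω ∈ S_n, let P ∈ Π(ω), and let i, j, k be pipes with i < j < k and ω⁻¹(i) > ω⁻¹(j) > ω⁻¹(k). If the contact graph P♯ has an arc i → k, then either (i ⪯_P j and k ⪯_P j) or (j ⪯_P i and j ⪯_P k). -/

import Mathlib

/-- A pipe dream of size `n` on the triangular shape, with boxes indexed by pairs
`(r, c)` of a row `r` and a column `c`, both `0`-indexed (rows increase southwards,
columns increase eastwards).  `cross r c = true` means that box `(r, c)` contains a
crossing tile; all other boxes contain elbow tiles.  Crossings are only allowed in
the full boxes of the triangular shape, i.e. those with `r + c + 2 ≤ n` (the boxes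
with `r + c + 1 = n` are the half-boxes on the antidiagonal, which are forced
elbows).  The `n` pipes enter horizontally on the left side in rows `0, …, n-1` and
exit vertically on the top side in columns `0, …, n-1`; pipe `k` is the pipe
entering at row `k`.  An elbow tile connects the west edge of its box to the north
edge (the pipe travelling through this elbow passes northwest of the tile) and the
south edge to the east edge (this pipe passes southeast of the tile); a crossing
tile connects west to east and south to north. -/
structure PipeDream (n : ℕ) where
  cross : ℕ → ℕ → Bool
  inShape : ∀ r c : ℕ, cross r c = true → r + c + 2 ≤ n

namespace PipeDream

variable {n : ℕ}

/-- `(P.pipes r c).1` is the label of the pipe entering box `(r, c)` from the west,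
and `(P.pipes r c).2` is the label of the pipe entering box `(r, c)` from the south
(junk value `0` if there is no box below box `(r, c)` in the triangular shape). -/
def pipes (P : PipeDream n) : ℕ → ℕ → ℕ × ℕ
  | r, c =>
    (if hc : c = 0 then r
      else if P.cross r (c - 1) then (pipes P r (c - 1)).1 else (pipes P r (c - 1)).2,
     if hr : r + c + 2 ≤ n then
        if P.cross (r + 1) c then (pipes P (r + 1) c).2 else (pipes P (r + 1) c).1
      else 0)
  termination_by r c => (n - r) + c
  decreasing_by all_goals omega

/-- The pipe entering box `(r, c)` from the west (travelling eastwards). -/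
def west (P : PipeDream n) (r c : ℕ) : ℕ := (pipes P r c).1

/-- The pipe entering box `(r, c)` from the south (travelling northwards). -/
def south (P : PipeDream n) (r c : ℕ) : ℕ := (pipes P r c).2

/-- The pipe exiting on the top side at column `c`. -/
def exitPipe (P : PipeDream n) (c : ℕ) : ℕ :=
  if P.cross 0 c then P.south 0 c else P.west 0 c

/-- `P` has exit permutation `ω`, i.e. the pipe exiting at column `c` is `ω c`;
equivalently, pipe `k` exits at column `ω⁻¹ k`. -/
def HasExitPerm (P : PipeDream n) (ω : Equiv.Perm (Fin n)) : Prop :=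
  ∀ c : Fin n, P.exitPipe c.val = (ω c).val

/-- `P` is reduced: any two of its pipes cross at most once. -/
def Reduced (P : PipeDream n) : Prop :=
  ∀ r c r' c' : ℕ, P.cross r c = true → P.cross r' c' = true → (r, c) ≠ (r', c') →
    ¬ ((P.west r c = P.west r' c' ∧ P.south r c = P.south r' c') ∨
        (P.west r c = P.south r' c' ∧ P.south r c = P.west r' c'))

/-- The arcs of the contact graph `P♯` of `P`: there is one arc for each elbow
contact of `P` (an elbow tile in a full box of the triangular shape), oriented from
the pipe passing northwest of the contact (the one travelling west-to-north) to the
pipe passing southeast of it (the one travelling south-to-east). -/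
def Arc (P : PipeDream n) (i j : ℕ) : Prop :=
  ∃ r c : ℕ, r + c + 2 ≤ n ∧ P.cross r c = false ∧ P.west r c = i ∧ P.south r c = j

/-- `P` is acyclic: its contact graph has no directed cycle. -/
def Acyclic (P : PipeDream n) : Prop := ∀ i : ℕ, ¬ Relation.TransGen P.Arc i i

/-- `i ⪯_P j` : there is a directed path (possibly empty) from `i` to `j` in the
contact graph of `P`. -/
def Path (P : PipeDream n) (i j : ℕ) : Prop := Relation.ReflTransGen P.Arc i j

/-- `π` is a linear extension of `P` : `π⁻¹ i < π⁻¹ j` for every arc `i → j` of the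
contact graph of `P`. -/
def LinExt (P : PipeDream n) (π : Equiv.Perm (Fin n)) : Prop :=
  ∀ i j : Fin n, P.Arc i.val j.val → π⁻¹ i < π⁻¹ j

/-- There is a contact (an elbow tile in a full box) between pipes `i` and `j`
at box `b`. -/
def ContactAt (P : PipeDream n) (i j : ℕ) (b : ℕ × ℕ) : Prop :=
  b.1 + b.2 + 2 ≤ n ∧ P.cross b.1 b.2 = false ∧
    ((P.west b.1 b.2 = i ∧ P.south b.1 b.2 = j) ∨
      (P.west b.1 b.2 = j ∧ P.south b.1 b.2 = i))

/-- `P'` is obtained from `P` by the flip exchanging the contact at box `b` with the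
crossing at box `b'` (a contact and a crossing between the same two pipes). -/
def IsFlip (P P' : PipeDream n) (b b' : ℕ × ℕ) : Prop :=
  b ≠ b' ∧
  P.cross b.1 b.2 = false ∧ P.cross b'.1 b'.2 = true ∧
  P'.cross b.1 b.2 = true ∧ P'.cross b'.1 b'.2 = false ∧
  (∀ r c : ℕ, (r, c) ≠ b → (r, c) ≠ b' → P.cross r c = P'.cross r c) ∧
  ((P.west b.1 b.2 = P.west b'.1 b'.2 ∧ P.south b.1 b.2 = P.south b'.1 b'.2) ∨
    (P.west b.1 b.2 = P.south b'.1 b'.2 ∧ P.south b.1 b.2 = P.west b'.1 b'.2))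

/-- There is an increasing flip from `P` to `P'`: a flip exchanging a contact at a
box `b` weakly southwest of the box `b'` of the corresponding crossing. -/
def IncFlip (P P' : PipeDream n) : Prop :=
  ∃ b b' : ℕ × ℕ, P.IsFlip P' b b' ∧ b'.1 ≤ b.1 ∧ b.2 ≤ b'.2

end PipeDream

/-- The weak order on permutations of `Fin n` : `π ≤ σ` if and only if
`Inv(π) ⊆ Inv(σ)`, where `Inv(π)` is the set of pairs `(i, j)` with `i < j` and
`π⁻¹ i > π⁻¹ j`. -/
def WeakLE {n : ℕ} (π σ : Equiv.Perm (Fin n)) : Prop :=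
  ∀ i j : Fin n, i < j → π⁻¹ j < π⁻¹ i → σ⁻¹ j < σ⁻¹ i

namespace PipeDream

variable {n : ℕ} (P : PipeDream n)

lemma west_zero (r : ℕ) : P.west r 0 = r := by
  unfold west
  rw [pipes]
  simp

lemma west_succ (r c : ℕ) :
    P.west r (c+1) = if P.cross r c then P.west r c else P.south r c := by
  unfold west south
  rw [pipes]
  simp

lemma south_def (r c : ℕ) (h : r + c + 2 ≤ n) :
    P.south r c = if P.cross (r+1) c then P.south (r+1) c else P.west (r+1) c := by
  unfold west south
  conv_lhs => rw [pipes]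
  simp [h]

lemma exit_def (c : ℕ) :
    P.exitPipe c = if P.cross 0 c then P.south 0 c else P.west 0 c := rfl

end PipeDream
namespace PipeDream

variable {n : ℕ} (P : PipeDream n)

/-- Climb origin: the pipe arriving from the south of a full box entered the
column strip from the west at some lower row, crossing its way up. -/
lemma climb_origin : ∀ k r c, n - r ≤ k → r + c + 2 ≤ n →
    ∃ r', r < r' ∧ r' + c + 1 ≤ n ∧ P.cross r' c = false ∧
      P.west r' c = P.south r c ∧
      (∀ t, r < t → t < r' → P.cross t c = true) ∧
      (∀ t, r ≤ t → t < r' → P.south t c = P.south r c) := by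
  intro k
  induction k with
  | zero => intro r c hk hv; omega
  | succ k ih =>
    intro r c hk hv
    have hsd := P.south_def r c hv
    by_cases hx : P.cross (r+1) c = true
    · have hv' : (r+1) + c + 2 ≤ n := P.inShape _ _ hx
      have hS : P.south r c = P.south (r+1) c := by rw [hsd, hx]; simp
      obtain ⟨r', h1, h2, h3, h4, h5, h6⟩ := ih (r+1) c (by omega) hv'
      refine ⟨r', by omega, h2, h3, by rw [h4, ← hS], ?_, ?_⟩
      · intro t ht1 ht2
        rcases Nat.lt_or_ge t (r+1) with h | h
        · omega
        · rcases Nat.eq_or_lt_of_le h with h' | h'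
          · rw [← h']; exact hx
          · exact h5 t h' ht2
      · intro t ht1 ht2
        rcases Nat.lt_or_ge t (r+1) with h | h
        · have : t = r := by omega
          rw [this]
        · rw [h6 t h ht2, ← hS]
    · have hx' : P.cross (r+1) c = false := by
        cases h : P.cross (r+1) c
        · rfl
        · exact absurd h hx
      have hS : P.south r c = P.west (r+1) c := by rw [hsd, hx']; simp
      refine ⟨r+1, by omega, by omega, hx', hS.symm, ?_, ?_⟩
      · intro t ht1 ht2; omega
      · intro t ht1 ht2
        have : t = r := by omega
        rw [this]

/-- Climbing up a column strip: a pipe arriving from the south either exits east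
at the first elbow above, or exits at the top of the triangle. -/
lemma climb_up : ∀ t c p, t + c + 2 ≤ n → P.south t c = p →
    (∃ t', t' ≤ t ∧ P.cross t' c = false ∧
      (∀ t'', t' ≤ t'' → t'' ≤ t → P.south t'' c = p) ∧
      (∀ t'', t' < t'' → t'' ≤ t → P.cross t'' c = true)) ∨
    ((∀ t'', t'' ≤ t → P.south t'' c = p ∧ P.cross t'' c = true) ∧ p = P.exitPipe c) := by
  intro t
  induction t with
  | zero =>
    intro c p hv hS
    by_cases hx : P.cross 0 c = true
    · right
      constructor
      · intro t'' ht''; interval_cases t''; exact ⟨hS, hx⟩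
      · rw [P.exit_def, hx]; simp [hS]
    · left
      have hx' : P.cross 0 c = false := by
        cases h : P.cross 0 c
        · rfl
        · exact absurd h hx
      exact ⟨0, le_refl _, hx', fun t'' h1 h2 => by interval_cases t''; exact hS,
        fun t'' h1 h2 => by omega⟩
  | succ t ih =>
    intro c p hv hS
    by_cases hx : P.cross (t+1) c = true
    · have hS' : P.south t c = p := by
        rw [P.south_def t c (by omega), hx]; simpa using hS
      rcases ih c p (by omega) hS' with ⟨t', h1, h2, h3, h4⟩ | ⟨h1, h2⟩
      · left
        refine ⟨t', by omega, h2, ?_, ?_⟩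
        · intro t'' ht1 ht2
          rcases Nat.eq_or_lt_of_le ht2 with h | h
          · rw [h]; exact hS
          · exact h3 t'' ht1 (by omega)
        · intro t'' ht1 ht2
          rcases Nat.eq_or_lt_of_le ht2 with h | h
          · rw [h]; exact hx
          · exact h4 t'' ht1 (by omega)
      · right
        refine ⟨?_, h2⟩
        intro t'' ht''
        rcases Nat.eq_or_lt_of_le ht'' with h | h
        · rw [h]; exact ⟨hS, hx⟩
        · exact h1 t'' (by omega)
    · left
      have hx' : P.cross (t+1) c = false := by
        cases h : P.cross (t+1) c
        · rfl
        · exact absurd h hx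
      exact ⟨t+1, le_refl _, hx', fun t'' h1 h2 => by
          have : t'' = t+1 := by omega
          rw [this]; exact hS,
        fun t'' h1 h2 => by omega⟩

/-- Where a west value at column `c+1` comes from. -/
lemma west_succ_origin (r c : ℕ) (h : r + c + 2 ≤ n) :
    ∃ s, r ≤ s ∧ s + c + 1 ≤ n ∧ P.west s c = P.west r (c+1) ∧
      ((s = r ∧ P.cross r c = true) ∨
        (r < s ∧ P.cross s c = false ∧ P.cross r c = false ∧
          (∀ t, r < t → t < s → P.cross t c = true) ∧
          (∀ t, r ≤ t → t < s → P.south t c = P.west r (c+1)))) := by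
  by_cases hx : P.cross r c = true
  · refine ⟨r, le_refl _, by omega, ?_, Or.inl ⟨rfl, hx⟩⟩
    rw [P.west_succ, hx]; simp
  · have hx' : P.cross r c = false := by
      cases h' : P.cross r c
      · rfl
      · exact absurd h' hx
    have hW : P.west r (c+1) = P.south r c := by rw [P.west_succ, hx']; simp
    obtain ⟨r', h1, h2, h3, h4, h5, h6⟩ := P.climb_origin (n - r) r c (le_refl _) h
    refine ⟨r', by omega, h2, by rw [h4, hW], Or.inr ⟨h1, h3, hx', h5, ?_⟩⟩
    intro t ht1 ht2
    rw [h6 t ht1 ht2, hW]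

/-- Injectivity of `west` along a vertical line. -/
lemma west_inj : ∀ c r1 r2, r1 + c + 1 ≤ n → r2 + c + 1 ≤ n →
    P.west r1 c = P.west r2 c → r1 = r2 := by
  intro c
  induction c with
  | zero => intro r1 r2 _ _ h; rwa [P.west_zero, P.west_zero] at h
  | succ c ih =>
    intro r1 r2 h1 h2 he
    obtain ⟨s1, hs1a, hs1b, hs1c, hs1d⟩ := P.west_succ_origin r1 c (by omega)
    obtain ⟨s2, hs2a, hs2b, hs2c, hs2d⟩ := P.west_succ_origin r2 c (by omega)
    have hs12 : s1 = s2 := ih s1 s2 hs1b hs2b (by rw [hs1c, hs2c, he])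
    rcases hs1d with ⟨he1, hx1⟩ | ⟨hlt1, hxe1, hx1, hch1, _⟩ <;>
      rcases hs2d with ⟨he2, hx2⟩ | ⟨hlt2, hxe2, hx2, hch2, _⟩
    · omega
    · exfalso; rw [he1] at hs12; rw [hs12] at hx1; rw [hx1] at hxe2; exact Bool.noConfusion hxe2
    · exfalso; rw [he2] at hs12; rw [← hs12] at hx2; rw [hx2] at hxe1; exact Bool.noConfusion hxe1
    · -- both climbed to the same origin
      rcases lt_trichotomy r1 r2 with h | h | h
      · exfalso
        have := hch1 r2 (by omega) (by omega)
        rw [this] at hx2; exact Bool.noConfusion hx2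
      · exact h
      · exfalso
        have := hch2 r1 (by omega) (by omega)
        rw [this] at hx1; exact Bool.noConfusion hx1

/-- Pipes are in range. -/
lemma west_lt : ∀ c r, r + c + 1 ≤ n → P.west r c < n := by
  intro c
  induction c with
  | zero => intro r h; rw [P.west_zero]; omega
  | succ c ih =>
    intro r h
    obtain ⟨s, _, hsb, hsc, _⟩ := P.west_succ_origin r c (by omega)
    rw [← hsc]; exact ih s hsb

/-- A pipe present at a line either advances to the next line or exits the top. -/
lemma advance_or_exit (r C p : ℕ) (h : P.west r C = p) (hv : r + C + 1 ≤ n) :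
    (∃ r', r' ≤ r ∧ r' + C + 2 ≤ n ∧ P.west r' (C+1) = p) ∨ p = P.exitPipe C := by
  by_cases hx : P.cross r C = true
  · left
    refine ⟨r, le_refl _, P.inShape _ _ hx, ?_⟩
    rw [P.west_succ, hx]; simp [h]
  · have hx' : P.cross r C = false := by
      cases h' : P.cross r C
      · rfl
      · exact absurd h' hx
    match r, h, hv with
    | 0, h, hv =>
      right; rw [P.exit_def, hx']; simp [h]
    | (ry+1), h, hv =>
      have hS : P.south ry C = p := by
        rw [P.south_def ry C (by omega), hx']; simp [h]
      rcases P.climb_up ry C p (by omega) hS with ⟨t', ht1, ht2, ht3, _⟩ | ⟨_, hex⟩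
      · left
        refine ⟨t', by omega, by omega, ?_⟩
        rw [P.west_succ, ht2]; simp [ht3 t' (le_refl _) ht1]
      · right; exact hex

/-- A pipe present at line `T+1` was present at line `T`, weakly lower. -/
lemma pres_back (a T p : ℕ) (h : P.west a (T+1) = p) (hv : a + T + 2 ≤ n) :
    ∃ a', a ≤ a' ∧ a' + T + 1 ≤ n ∧ P.west a' T = p := by
  obtain ⟨s, hsa, hsb, hsc, _⟩ := P.west_succ_origin a T hv
  exact ⟨s, hsa, hsb, by rw [hsc, h]⟩

end PipeDream
namespace PipeDream

variable {n : ℕ} (P : PipeDream n)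

/-- If two pipes swap their vertical order between two consecutive lines, they
cross at the upper pipe's box in that strip. -/
lemma swap_step (p q r1 r2 r1' r2' τ : ℕ)
    (hp1 : P.west r1 τ = p) (hq1 : P.west r2 τ = q) (hlt : r1 < r2)
    (hv2 : r2 + τ + 1 ≤ n)
    (hp2 : P.west r1' (τ+1) = p) (hq2 : P.west r2' (τ+1) = q)
    (hv1' : r1' + τ + 2 ≤ n) (hv2' : r2' + τ + 2 ≤ n)
    (hswap : r2' < r1') :
    P.cross r1 τ = true ∧ P.south r1 τ = q := by
  obtain ⟨s1, hs1a, hs1b, hs1c, hs1d⟩ := P.west_succ_origin r1' τ hv1'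
  have hs1 : s1 = r1 := P.west_inj τ s1 r1 hs1b (by omega) (by rw [hs1c, hp2, hp1])
  have hr1'le : r1' ≤ r1 := by omega
  obtain ⟨s2, hs2a, hs2b, hs2c, hs2d⟩ := P.west_succ_origin r2' τ hv2'
  have hs2 : s2 = r2 := P.west_inj τ s2 r2 hs2b hv2 (by rw [hs2c, hq2, hq1])
  rcases hs2d with ⟨he2, _⟩ | ⟨hlt2, _, _, hch2, hchS2⟩
  · omega
  · constructor
    · exact hch2 r1 (by omega) (by omega)
    · rw [hchS2 r1 (by omega) (by omega), hq2]

/-- If two pipes swap their vertical order between two lines, they cross at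
some strip in between, the initially-upper pipe entering from the west. -/
lemma swap_int : ∀ T2 p q a1 b1 a2 b2 T1, T1 ≤ T2 →
    P.west a1 T1 = p → P.west b1 T1 = q → a1 < b1 → b1 + T1 + 1 ≤ n →
    P.west a2 T2 = p → P.west b2 T2 = q → b2 < a2 → a2 + T2 + 1 ≤ n →
    ∃ ρ τ, T1 ≤ τ ∧ τ < T2 ∧ P.cross ρ τ = true ∧ P.west ρ τ = p ∧ P.south ρ τ = q := by
  intro T2
  induction T2 with
  | zero =>
    intro p q a1 b1 a2 b2 T1 hT hp1 hq1 hlt1 hv1 hp2 hq2 hlt2 hv2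
    exfalso
    have hT1 : T1 = 0 := by omega
    subst hT1
    have ha : a1 = a2 := P.west_inj 0 a1 a2 (by omega) (by omega) (by rw [hp1, hp2])
    have hb : b1 = b2 := P.west_inj 0 b1 b2 hv1 (by omega) (by rw [hq1, hq2])
    omega
  | succ T2 ih =>
    intro p q a1 b1 a2 b2 T1 hT hp1 hq1 hlt1 hv1 hp2 hq2 hlt2 hv2
    rcases Nat.eq_or_lt_of_le hT with hT' | hT'
    · exfalso
      subst hT'
      have ha : a1 = a2 := P.west_inj _ a1 a2 (by omega) hv2 (by rw [hp1, hp2])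
      have hb : b1 = b2 := P.west_inj _ b1 b2 hv1 (by omega) (by rw [hq1, hq2])
      omega
    · obtain ⟨a', haa, hav, haw⟩ := P.pres_back a2 T2 p hp2 (by omega)
      obtain ⟨b', hba, hbv, hbw⟩ := P.pres_back b2 T2 q hq2 (by omega)
      have hpq : p ≠ q := by
        intro h
        have := P.west_inj T1 a1 b1 (by omega) hv1 (by rw [hp1, hq1, h])
        omega
      rcases lt_trichotomy a' b' with h | h | h
      · -- swap in strip T2
        obtain ⟨hx, hS⟩ := P.swap_step p q a' b' a2 b2 T2 haw hbw h hbv hp2 hq2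
          (by omega) (by omega) hlt2
        exact ⟨a', T2, by omega, by omega, hx, haw, hS⟩
      · exact absurd (show p = q by rw [← haw, h, hbw]) hpq
      · obtain ⟨ρ, τ, h1, h2, h3, h4, h5⟩ :=
          ih p q a1 b1 a' b' T1 (by omega) hp1 hq1 hlt1 hv1 haw hbw h hav
        exact ⟨ρ, τ, h1, by omega, h3, h4, h5⟩

/-- At any crossing of a reduced pipe dream, the west pipe is smaller than the
south pipe. -/
lemma west_lt_south (hred : P.Reduced) (rx cx : ℕ) (hx : P.cross rx cx = true) :
    P.west rx cx < P.south rx cx := by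
  have hv : rx + cx + 2 ≤ n := P.inShape _ _ hx
  obtain ⟨r', h1, h2, h3, h4, _, _⟩ := P.climb_origin (n - rx) rx cx (le_refl _) hv
  have hne : P.west rx cx ≠ P.south rx cx := by
    intro h
    have := P.west_inj cx r' rx h2 (by omega) (by rw [h4, h])
    omega
  rcases lt_trichotomy (P.west rx cx) (P.south rx cx) with h | h | h
  · exact h
  · exact absurd h hne
  · exfalso
    -- s < w : swap between line 0 and line cx
    set s := P.south rx cx with hs
    set w := P.west rx cx with hw
    have hsn : s < n := by rw [← h4]; exact P.west_lt cx r' h2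
    have hwn : w < n := P.west_lt cx rx (by omega)
    obtain ⟨ρ, τ, ht1, ht2, ht3, ht4, ht5⟩ := P.swap_int cx s w s w r' rx 0 (by omega)
      (by rw [P.west_zero]) (by rw [P.west_zero]) h (by omega)
      h4 rfl h1 (by omega)
    exact hred ρ τ rx cx ht3 hx (by intro hc; rw [Prod.mk.injEq] at hc; omega)
      (Or.inr ⟨by rw [ht4], by rw [ht5]⟩)

section Perm

variable (ω : Equiv.Perm (Fin n))

/-- Exit column of a pipe. -/
def invv (p : ℕ) : ℕ := if h : p < n then (ω⁻¹ ⟨p, h⟩ : Fin n).val else 0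

lemma invv_coe (x : Fin n) : invv ω x.val = ((ω⁻¹ : Equiv.Perm (Fin n)) x).val := by
  rw [invv, dif_pos x.isLt]

lemma exit_eq_invv (hexit : P.HasExitPerm ω) (C p : ℕ) (hC : C < n) (hp : p < n)
    (h : P.exitPipe C = p) : invv ω p = C := by
  have h1 := hexit ⟨C, hC⟩
  have h2 : ω ⟨C, hC⟩ = ⟨p, hp⟩ := by
    apply Fin.ext
    rw [← h1, h]
  rw [invv, dif_pos hp, ← h2, Equiv.Perm.inv_def, Equiv.symm_apply_apply]

lemma exit_col (hexit : P.HasExitPerm ω) :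
    ∀ k C r p, n ≤ C + k → P.west r C = p → r + C + 1 ≤ n → C ≤ invv ω p := by
  intro k
  induction k with
  | zero => intro C r p hk _ hv; omega
  | succ k ih =>
    intro C r p hk hW hv
    rcases P.advance_or_exit r C p hW hv with ⟨r', _, hv', hW'⟩ | hex
    · have := ih (C+1) r' p (by omega) hW' (by omega)
      omega
    · rw [P.exit_eq_invv ω hexit C p (by omega) (by rw [← hW]; exact P.west_lt C r hv) hex.symm]

lemma pres_all (hexit : P.HasExitPerm ω) :
    ∀ C p, p < n → C ≤ invv ω p → ∃ r, P.west r C = p ∧ r + C + 1 ≤ n := by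
  intro C
  induction C with
  | zero => intro p hp _; exact ⟨p, P.west_zero p, by omega⟩
  | succ C ih =>
    intro p hp hC
    obtain ⟨r, hW, hv⟩ := ih p hp (by omega)
    rcases P.advance_or_exit r C p hW hv with ⟨r', _, hv', hW'⟩ | hex
    · exact ⟨r', hW', by omega⟩
    · exfalso
      have := P.exit_eq_invv ω hexit C p (by omega) hp hex.symm
      omega

end Perm

end PipeDream
namespace PipeDream

variable {n : ℕ}

/-- Statement A: the south pipe of a crossing reaches the west pipe in the
contact graph, provided it turns east again after the crossing. -/
def StA (P : PipeDream n) (ω : Equiv.Perm (Fin n)) (N : ℕ) : Prop :=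
  ∀ rx cx w s, 3*(n-cx)*(n+1) ≤ N → P.cross rx cx = true →
    P.west rx cx = w → P.south rx cx = s → cx < invv ω s → P.Path s w

/-- Statement D: a pipe that has just turned east at an elbow reaches every pipe
entering the next line below it. -/
def StD (P : PipeDream n) (ω : Equiv.Perm (Fin n)) (N : ℕ) : Prop :=
  ∀ r0 C m q rq, (3*(n-C)+1)*(n+1) + (rq - r0) ≤ N → r0 + C + 2 ≤ n →
    P.cross r0 C = false → P.south r0 C = m → P.west rq (C+1) = q →
    r0 < rq → rq + C + 2 ≤ n → m ≠ q → P.Path m q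

/-- Statement R: a pipe above another one on a vertical line, never crossing it
to the east, reaches it in the contact graph. -/
def StR (P : PipeDream n) (N : ℕ) : Prop :=
  ∀ r1 r2 T s w, (3*(n-T)+2)*(n+1) ≤ N → P.west r1 T = s → P.west r2 T = w →
    r1 < r2 → r2 + T + 1 ≤ n → s ≠ w →
    (∀ ρ τ, T ≤ τ → P.cross ρ τ = true →
      ¬((P.west ρ τ = s ∧ P.south ρ τ = w) ∨ (P.west ρ τ = w ∧ P.south ρ τ = s))) →
    P.Path s w

lemma master (P : PipeDream n) (ω : Equiv.Perm (Fin n)) (hred : P.Reduced)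
    (hexit : P.HasExitPerm ω) : ∀ N, StA P ω N ∧ StD P ω N ∧ StR P N := by
  intro N
  induction N using Nat.strong_induction_on with
  | _ N IH =>
    have hA : StA P ω N := by
      intro rx cx w s hN hx hw hs hinv
      have hvx : rx + cx + 2 ≤ n := P.inShape _ _ hx
      obtain ⟨rs, hr1, hr2, hr3, hr4, _, _⟩ :=
        P.climb_origin (n - rx) rx cx (le_refl _) hvx
      have hsval : P.west rs cx = s := by rw [hr4, hs]
      have hsn : s < n := by rw [← hsval]; exact P.west_lt cx rs hr2
      have hsw : s ≠ w := by
        intro h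
        have := P.west_inj cx rs rx hr2 (by omega) (by rw [hsval, h, hw])
        omega
      match rx, hx, hw, hvx, hr1 with
      | 0, hx, hw, hvx, hr1 =>
        exfalso
        have hex : P.exitPipe cx = s := by rw [P.exit_def, hx]; simp [hs]
        have := P.exit_eq_invv ω hexit cx s (by omega) hsn hex
        omega
      | (ry+1), hx, hw, hvx, hr1 =>
        have hS : P.south ry cx = s := by
          rw [P.south_def ry cx (by omega), hx]; simp [hs]
        rcases P.climb_up ry cx s (by omega) hS with ⟨t', ht1, ht2, ht3, _⟩ | ⟨_, hex⟩
        · -- s = west t' (cx+1), w = west (ry+1) (cx+1)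
          have hsW : P.west t' (cx+1) = s := by
            rw [P.west_succ, ht2]; simp [ht3 t' (le_refl _) ht1]
          have hwW : P.west (ry+1) (cx+1) = w := by
            rw [P.west_succ, hx]; simp [hw]
          have hdec : (3*(n-(cx+1))+2)*(n+1) < 3*(n-cx)*(n+1) := by
            apply mul_lt_mul_of_pos_right _ (by omega : (0:ℕ) < n+1)
            omega
          refine (IH ((3*(n-(cx+1))+2)*(n+1)) (by omega)).2.2 t' (ry+1) (cx+1) s w
            (le_refl _) hsW hwW (by omega) (by omega) hsw ?_
          intro ρ τ hτ hρx hor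
          refine hred (ry+1) cx ρ τ hx hρx
            (by intro hc; rw [Prod.mk.injEq] at hc; omega) ?_
          rcases hor with ⟨h1, h2⟩ | ⟨h1, h2⟩
          · exact Or.inr ⟨by rw [hw, ← h2], by rw [hs, ← h1]⟩
          · exact Or.inl ⟨by rw [hw, ← h1], by rw [hs, ← h2]⟩
        · exfalso
          have := P.exit_eq_invv ω hexit cx s (by omega) hsn hex.symm
          omega
    have hD : StD P ω N := by
      intro r0 C m q rq hN hfull he hm hq hlt hqv hmq
      have hmW : P.west r0 (C+1) = m := by rw [P.west_succ, he]; simp [hm]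
      obtain ⟨rm, h1, h2, h3, h4, h5, h6⟩ := P.climb_origin (n - r0) r0 C (le_refl _) hfull
      rcases lt_trichotomy rm rq with hc | hc | hc
      · -- arc m → p1 at (rm, C), then recurse D
        have harc : P.Arc m (P.south rm C) :=
          ⟨rm, C, by omega, h3, by rw [h4, hm], rfl⟩
        have hp1W : P.west rm (C+1) = P.south rm C := by
          rw [P.west_succ, h3]; simp
        by_cases hp1q : P.south rm C = q
        · exact Relation.ReflTransGen.single (hp1q ▸ harc)
        · have hdec : (3*(n-C)+1)*(n+1) + (rq - rm) < (3*(n-C)+1)*(n+1) + (rq - r0) := by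
            omega
          exact Relation.ReflTransGen.head harc
            ((IH ((3*(n-C)+1)*(n+1) + (rq - rm)) (by omega)).2.1 rm C (P.south rm C) q rq
              (le_refl _) (by omega) h3 rfl hq hc hqv hp1q)
      · -- elbow (rq, C) with west = m, south = q : direct arc
        subst hc
        have hqS : P.south rm C = q := by
          rw [P.west_succ, h3] at hq; simp at hq; exact hq
        exact Relation.ReflTransGen.single ⟨rm, C, hqv, h3, by rw [h4, hm], hqS⟩
      · -- crossing (rq, C) with west = q, south = m : apply A
        have hxq : P.cross rq C = true := h5 rq hlt hc
        have hmS : P.south rq C = m := by rw [h6 rq (by omega) hc, hm]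
        have hqW : P.west rq C = q := by
          rw [P.west_succ, hxq] at hq; simp at hq; exact hq
        have hminv : C < invv ω m :=
          lt_of_lt_of_le (by omega) (P.exit_col ω hexit (n - (C+1)) (C+1) r0 m
            (by omega) hmW (by omega))
        have hdec : 3*(n-C)*(n+1) < (3*(n-C)+1)*(n+1) + (rq - r0) := by
          have : 3*(n-C)*(n+1) < (3*(n-C)+1)*(n+1) :=
            mul_lt_mul_of_pos_right (by omega) (by omega)
          omega
        exact (IH (3*(n-C)*(n+1)) (by omega)).1 rq C q m (le_refl _) hxq hqW hmS hminv
    refine ⟨hA, hD, ?_⟩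
    intro r1 r2 T s w hN hs hw hlt hv hsw hnc
    -- w-side: find R2' with west R2' (T+1) = w, r1 < R2', valid; or finish
    have hwside : (∃ R2', r1 < R2' ∧ R2' + T + 2 ≤ n ∧ P.west R2' (T+1) = w) ∨ P.Path s w := by
      by_cases hx2 : P.cross r2 T = true
      · exact Or.inl ⟨r2, hlt, P.inShape _ _ hx2, by rw [P.west_succ, hx2]; simp [hw]⟩
      · have hx2' : P.cross r2 T = false := by
          cases h' : P.cross r2 T
          · rfl
          · exact absurd h' hx2
        match r2, hw, hlt, hv, hx2' with
        | (rr+1), hw, hlt, hv, hx2' =>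
          have hwS : P.south rr T = w := by
            rw [P.south_def rr T (by omega), hx2']; simp [hw]
          rcases P.climb_up rr T w (by omega) hwS with ⟨t', ht1, ht2, ht3, ht4⟩ | ⟨hch, _⟩
          · rcases lt_trichotomy t' r1 with h | h | h
            · exfalso
              exact hnc r1 T (le_refl _) (ht4 r1 h (by omega))
                (Or.inl ⟨hs, ht3 r1 (by omega) (by omega)⟩)
            · -- elbow (r1, T) with west s, south w : arc
              subst h
              exact Or.inr (Relation.ReflTransGen.single
                ⟨t', T, by omega, ht2, hs, ht3 t' (le_refl _) ht1⟩)
            · exact Or.inl ⟨t', h, by omega, by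
                rw [P.west_succ, ht2]; simp [ht3 t' (le_refl _) ht1]⟩
          · exfalso
            exact hnc r1 T (le_refl _) (hch r1 (by omega)).2
              (Or.inl ⟨hs, (hch r1 (by omega)).1⟩)
    rcases hwside with ⟨R2', hR2lt, hR2v, hR2⟩ | hdone
    · by_cases hx1 : P.cross r1 T = true
      · -- s advances: recurse R at T+1
        have hsW : P.west r1 (T+1) = s := by rw [P.west_succ, hx1]; simp [hs]
        have hdec : (3*(n-(T+1))+2)*(n+1) < (3*(n-T)+2)*(n+1) :=
          mul_lt_mul_of_pos_right (by omega) (by omega)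
        exact (IH ((3*(n-(T+1))+2)*(n+1)) (by omega)).2.2 r1 R2' (T+1) s w
          (le_refl _) hsW hR2 hR2lt (by omega) hsw
          (fun ρ τ hτ => hnc ρ τ (by omega))
      · have hx1' : P.cross r1 T = false := by
          cases h' : P.cross r1 T
          · rfl
          · exact absurd h' hx1
        have harc : P.Arc s (P.south r1 T) := ⟨r1, T, by omega, hx1', hs, rfl⟩
        by_cases hmw : P.south r1 T = w
        · exact Relation.ReflTransGen.single (hmw ▸ harc)
        · have hmW : P.west r1 (T+1) = P.south r1 T := by rw [P.west_succ, hx1']; simp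
          have hdec : (3*(n-T)+1)*(n+1) + (R2' - r1) < (3*(n-T)+2)*(n+1) := by
            have h1 : (3*(n-T)+2)*(n+1) = (3*(n-T)+1)*(n+1) + (n+1) := by ring
            omega
          exact Relation.ReflTransGen.head harc
            ((IH ((3*(n-T)+1)*(n+1) + (R2' - r1)) (by omega)).2.1 r1 T (P.south r1 T) w R2'
              (le_refl _) (by omega) hx1' rfl hR2 hR2lt hR2v hmw)
    · exact hdone

end PipeDream
/-- Let `ω ∈ S_n`, `P ∈ Π(ω)`, and let `i, j, k` be pipes with
`i < j < k` and `ω⁻¹ i > ω⁻¹ j > ω⁻¹ k`.  If the contact graph `P♯` has an arc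
`i → k`, then either (`i ⪯_P j` and `k ⪯_P j`) or (`j ⪯_P i` and `j ⪯_P k`). -/
theorem path_of_arc_between (n : ℕ) (ω : Equiv.Perm (Fin n)) (P : PipeDream n)
    (hred : P.Reduced) (hexit : P.HasExitPerm ω)
    (i j k : Fin n) (hij : i < j) (hjk : j < k)
    (hw1 : ω⁻¹ j < ω⁻¹ i) (hw2 : ω⁻¹ k < ω⁻¹ j)
    (harc : P.Arc i.val k.val) :
    (P.Path i.val j.val ∧ P.Path k.val j.val) ∨
    (P.Path j.val i.val ∧ P.Path j.val k.val) := by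
  open PipeDream in
  obtain ⟨r, c, hfull, he, hWi, hSk⟩ := id harc
  have hkW : P.west r (c+1) = k.val := by rw [P.west_succ, he]; simp [hSk]
  have hinvk : c + 1 ≤ invv ω k.val :=
    P.exit_col ω hexit (n - (c+1)) (c+1) r k.val (by omega) hkW (by omega)
  have hkj : invv ω k.val < invv ω j.val := by
    rw [invv_coe, invv_coe]; exact hw2
  have hji : invv ω j.val < invv ω i.val := by
    rw [invv_coe, invv_coe]; exact hw1
  have hvij : i.val < j.val := hij
  have hvjk : j.val < k.val := hjk
  have hA := (master P ω hred hexit (3*n*(n+1))).1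
  -- r cannot be 0
  obtain ⟨ry, rfl⟩ : ∃ ry, r = ry + 1 := by
    rcases Nat.eq_zero_or_pos r with h0 | h0
    · exfalso
      subst h0
      have hex : P.exitPipe c = i.val := by rw [P.exit_def, he]; simp [hWi]
      have := P.exit_eq_invv ω hexit c i.val (by omega) i.isLt hex
      omega
    · exact ⟨r - 1, by omega⟩
  -- i climbs strip c and exits east at row Ri < ry + 1
  have hiS : P.south ry c = i.val := by
    rw [P.south_def ry c (by omega), he]; simp [hWi]
  rcases P.climb_up ry c i.val (by omega) hiS with ⟨Ri, hRi1, hRi2, hRi3, _⟩ | ⟨_, hex⟩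
  swap
  · exfalso
    have := P.exit_eq_invv ω hexit c i.val (by omega) i.isLt hex.symm
    omega
  have hiW : P.west Ri (c+1) = i.val := by
    rw [P.west_succ, hRi2]; simp [hRi3 Ri (le_refl _) hRi1]
  -- j is present at line c+1
  obtain ⟨rj, hjW, hjv⟩ := P.pres_all ω hexit (c+1) j.val j.isLt (by omega)
  rcases lt_trichotomy rj (ry+1) with hc1 | hc1 | hc1
  · -- j above k at line c+1
    rcases lt_trichotomy rj Ri with hc2 | hc2 | hc2
    · -- j above i at line c+1 : i and j crossed at a column ≤ c
      obtain ⟨ρ, τ, hτ1, hτ2, hτx, hτW, hτS⟩ := P.swap_int (c+1) i.val j.val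
        i.val j.val Ri rj 0 (by omega) (P.west_zero _) (P.west_zero _) hvij
        (by have := j.isLt; omega) hiW hjW hc2 (by omega)
      have pji : P.Path j.val i.val := hA ρ τ i.val j.val
        (Nat.mul_le_mul_right _ (by omega)) hτx hτW hτS (by omega)
      exact Or.inr ⟨pji, pji.tail harc⟩
    · exact absurd (by rw [← hiW, ← hc2]; exact hjW : i.val = j.val) (by omega)
    · -- Ri < rj < ry+1 : impossible
      exfalso
      obtain ⟨rj', hge, hv', hW'⟩ := P.pres_back rj c j.val hjW (by omega)
      rcases lt_trichotomy rj' (ry+1) with hc3 | hc3 | hc3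
      · -- swap of j (upper) and i in strip c : west j south i crossing, contra WS
        obtain ⟨hxc, hSc⟩ := P.swap_step j.val i.val rj' (ry+1) rj Ri c
          hW' hWi hc3 (by omega) hjW hiW (by omega) (by omega) hc2
        have := P.west_lt_south hred rj' c hxc
        rw [hW', hSc] at this
        omega
      · rw [hc3, hWi] at hW'; omega
      · -- j came from below row ry+1 : would have to climb through (ry+1, c)
        by_cases hxx : P.cross rj c = true
        · have : P.west rj c = j.val := by
            rw [P.west_succ, hxx] at hjW; simpa using hjW
          have := P.west_inj c rj rj' (by omega) hv' (by rw [this, hW'])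
          omega
        · have hxx' : P.cross rj c = false := by
            cases h' : P.cross rj c
            · rfl
            · exact absurd h' hxx
          have hjS : P.south rj c = j.val := by
            rw [P.west_succ, hxx'] at hjW; simpa using hjW
          obtain ⟨rS, hx1, hx2, hx3, hx4, hx5, hx6⟩ :=
            P.climb_origin (n - rj) rj c (le_refl _) (by omega)
          have hrS : rS = rj' := P.west_inj c rS rj' hx2 hv' (by rw [hx4, hjS, hW'])
          have : P.south (ry+1) c = j.val := by
            rw [hx6 (ry+1) (by omega) (by omega), hjS]
          rw [hSk] at this
          omega
  · exact absurd (by rw [← hkW, ← hc1]; exact hjW : k.val = j.val) (by omega)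
  · -- k above j at line c+1 : j and k crossed at a column ≤ c
    obtain ⟨ρ, τ, hτ1, hτ2, hτx, hτW, hτS⟩ := P.swap_int (c+1) j.val k.val
      j.val k.val rj (ry+1) 0 (by omega) (P.west_zero _) (P.west_zero _) hvjk
      (by have := k.isLt; omega) hjW hkW hc1 (by omega)
    have pkj : P.Path k.val j.val := hA ρ τ j.val k.val
      (Nat.mul_le_mul_right _ (by omega)) hτx hτW hτS (by omega)
    exact Or.inl ⟨Relation.ReflTransGen.head harc pkj, pkj⟩
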